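/- The group ⟨x_1,…,x_5 | x_1x_2 = x_3, x_2x_3 = x_4, x_3x_4 = x_5, x_4x_5 = x_1, x_5x_1 = x_2⟩ (the Fibonacci group F(5)) has order 11; equivalently, it is cyclic of order 11. -/

import Mathlib

/-- The relators of the Fibonacci group `F(n)`: `x_i x_{i+1} x_{i+2}⁻¹` for `i` mod `n`. -/
def fibonacciRels (n : ℕ) : Set (FreeGroup (ZMod n)) :=
  ⋃ i : ZMod n,
    {FreeGroup.of i * FreeGroup.of (i + 1) * (FreeGroup.of (i + 2))⁻¹}

/-- The Fibonacci group `F(n) = ⟨x_1,…,x_n ∣ x_i x_{i+1} = x_{i+2}⟩`. -/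
def FibonacciGroup (n : ℕ) : Type := PresentedGroup (fibonacciRels n)

instance (n : ℕ) : Group (FibonacciGroup n) :=
  inferInstanceAs (Group (PresentedGroup (fibonacciRels n)))

/-- The target values of the generators in `ZMod 11`. -/
def fibAux : ZMod 5 → Multiplicative (ZMod 11) :=
  ![Multiplicative.ofAdd 1, Multiplicative.ofAdd 4, Multiplicative.ofAdd 5,
    Multiplicative.ofAdd 9, Multiplicative.ofAdd 3]

lemma fibAux_rel : ∀ i : ZMod 5, fibAux i * fibAux (i + 1) * (fibAux (i + 2))⁻¹ = 1 := by
  decide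

lemma fibAux_lift : ∀ r ∈ fibonacciRels 5, FreeGroup.lift fibAux r = 1 := by
  intro r hr
  simp only [fibonacciRels, Set.mem_iUnion, Set.mem_singleton_iff] at hr
  obtain ⟨i, rfl⟩ := hr
  rw [map_mul, map_mul, map_inv, FreeGroup.lift_apply_of, FreeGroup.lift_apply_of, FreeGroup.lift_apply_of]
  exact fibAux_rel i

set_option maxHeartbeats 2000000 in
/-- Conway's Fibonacci group `F(5)` is cyclic of order 11. -/
theorem fibonacciGroup_five : Nat.card (FibonacciGroup 5) = 11 ∧ IsCyclic (FibonacciGroup 5) := by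
  set x : ZMod 5 → FibonacciGroup 5 := fun i => PresentedGroup.of i with hxdef
  have rel : ∀ i : ZMod 5, x i * x (i + 1) = x (i + 2) := by
    intro i
    have hmem : FreeGroup.of i * FreeGroup.of (i + 1) * (FreeGroup.of (i + 2))⁻¹ ∈
        fibonacciRels 5 := Set.mem_iUnion.2 ⟨i, rfl⟩
    have h1 : (PresentedGroup.mk (fibonacciRels 5)
        (FreeGroup.of i * FreeGroup.of (i + 1) * (FreeGroup.of (i + 2))⁻¹) :
        FibonacciGroup 5) = 1 :=
      (QuotientGroup.eq_one_iff _).2 (Subgroup.subset_normalClosure hmem)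
    rw [map_mul, map_mul, map_inv] at h1
    have h2 : x i * x (i + 1) * (x (i + 2))⁻¹ = 1 := h1
    calc x i * x (i + 1) = x i * x (i + 1) * (x (i + 2))⁻¹ * x (i + 2) := by group
    _ = 1 * x (i + 2) := by rw [h2]
    _ = x (i + 2) := by group
  set a := x 0 with hadef
  set b := x 1 with hbdef
  have r0 : a * b = x 2 := by have := rel 0; simpa using this
  have r1 : b * x 2 = x 3 := by have := rel 1; exact this
  have r2 : x 2 * x 3 = x 4 := by have := rel 2; exact this
  have r3 : x 3 * x 4 = a := by have := rel 3; exact this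
  have r4 : x 4 * a = b := by have := rel 4; exact this
  have hx2 : x 2 = a * b := r0.symm
  have hx3 : x 3 = b * (a * b) := by rw [← r1, hx2]
  have hx4 : x 4 = a * b * (b * (a * b)) := by rw [← r2, hx2, hx3]
  have hA : b * a * b * a * b * b * a * b * a⁻¹ = 1 := by
    have h := r3
    rw [hx3, hx4] at h
    calc b * a * b * a * b * b * a * b * a⁻¹
        = b * (a * b) * (a * b * (b * (a * b))) * a⁻¹ := by group
    _ = a * a⁻¹ := by rw [h]
    _ = 1 := by group
  have hB : a * b * b * a * b * a * b⁻¹ = 1 := by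
    have h := r4
    rw [hx4] at h
    calc a * b * b * a * b * a * b⁻¹
        = a * b * (b * (a * b)) * a * b⁻¹ := by group
    _ = b * b⁻¹ := by rw [h]
    _ = 1 := by group
  have h3 : b * a * b * b * a⁻¹ * a⁻¹ = 1 := by
    have key : b * a * b * b * a⁻¹ * a⁻¹ = b * a * b * (a * b * b * a * b * a * b⁻¹)⁻¹ * (b * a * b)⁻¹ * ((b * a * b * a * b * b * a * b * a⁻¹)) := by simp only [mul_assoc, mul_inv_rev, inv_inv, inv_mul_cancel_left, mul_inv_cancel_left, inv_mul_cancel, mul_inv_cancel, one_mul, mul_one]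
    rw [key, hB, hA]; group
  have h4 : b⁻¹ * a * a * a * b * a * b⁻¹ = 1 := by
    have key : b⁻¹ * a * a * a * b * a * b⁻¹ = b⁻¹ * (b * a * b * b * a⁻¹ * a⁻¹)⁻¹ * b⁻¹⁻¹ * ((a * b * b * a * b * a * b⁻¹)) := by simp only [mul_assoc, mul_inv_rev, inv_inv, inv_mul_cancel_left, mul_inv_cancel_left, inv_mul_cancel, mul_inv_cancel, one_mul, mul_one]
    rw [key, h3, hB]; group
  have h5 : a * b⁻¹ * a⁻¹ * a⁻¹ * a⁻¹ * a⁻¹ * b⁻¹ = 1 := by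
    have key : a * b⁻¹ * a⁻¹ * a⁻¹ * a⁻¹ * a⁻¹ * b⁻¹ = (b * a * b * b * a⁻¹ * a⁻¹)⁻¹ * (b * a * b * (b⁻¹ * a * a * a * b * a * b⁻¹)⁻¹ * (b * a * b)⁻¹) := by simp only [mul_assoc, mul_inv_rev, inv_inv, inv_mul_cancel_left, mul_inv_cancel_left, inv_mul_cancel, mul_inv_cancel, one_mul, mul_one]
    rw [key, h3, h4]; group
  have h6 : b * a * a * a * a * b * a⁻¹ = 1 := by
    have key : b * a * a * a * a * b * a⁻¹ = (a * b⁻¹ * a⁻¹ * a⁻¹ * a⁻¹ * a⁻¹ * b⁻¹)⁻¹ := by simp only [mul_assoc, mul_inv_rev, inv_inv, inv_mul_cancel_left, mul_inv_cancel_left, inv_mul_cancel, mul_inv_cancel, one_mul, mul_one]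
    rw [key, h5]; group
  have h10 : a * a * a * a * a * a * a * a * b * a * a * b * b = 1 := by
    have key : a * a * a * a * a * a * a * a * b * a * a * b * b = a * a * a * a * b⁻¹ * (b * a * a * a * a * b * a⁻¹) * (a * a * a * a * b⁻¹)⁻¹ * (b⁻¹ * (b * a * a * a * a * b * a⁻¹) * b⁻¹⁻¹) * (b⁻¹ * a * b⁻¹ * (b⁻¹ * a * a * a * b * a * b⁻¹) * (b⁻¹ * a * b⁻¹)⁻¹) := by simp only [mul_assoc, mul_inv_rev, inv_inv, inv_mul_cancel_left, mul_inv_cancel_left, inv_mul_cancel, mul_inv_cancel, one_mul, mul_one]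
    rw [key, h6, h4]; group
  have h13 : b * a * a * a * a * a * a * a * a * a * b * a * a * a * a * a = 1 := by
    have key : b * a * a * a * a * a * a * a * a * a * b * a * a * a * a * a = a⁻¹ * a⁻¹ * a⁻¹ * b * (b⁻¹ * a * a * a * b * a * b⁻¹) * (a⁻¹ * a⁻¹ * a⁻¹ * b)⁻¹ * (a⁻¹ * a⁻¹ * a⁻¹ * b * b * (a * a * a * a * a * a * a * a * b * a * a * b * b) * (a⁻¹ * a⁻¹ * a⁻¹ * b * b)⁻¹) := by simp only [mul_assoc, mul_inv_rev, inv_inv, inv_mul_cancel_left, mul_inv_cancel_left, inv_mul_cancel, mul_inv_cancel, one_mul, mul_one]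
    rw [key, h4, h10]; group
  have hJ0 : b⁻¹ * a * a * a * a * a * b * a * a * a * a * a * a = 1 := by
    have key : b⁻¹ * a * a * a * a * a * b * a * a * a * a * a * a = a⁻¹ * (b * a * a * a * a * b * a⁻¹)⁻¹ * a⁻¹⁻¹ * (a⁻¹ * (b * a * a * a * a * a * a * a * a * a * b * a * a * a * a * a) * a⁻¹⁻¹) := by simp only [mul_assoc, mul_inv_rev, inv_inv, inv_mul_cancel_left, mul_inv_cancel_left, inv_mul_cancel, mul_inv_cancel, one_mul, mul_one]
    rw [key, h6, h13]; group
  have hK0 : a * a * a * a * a * a * a * a * a * a * a = 1 := by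
    have key : a * a * a * a * a * a * a * a * a * a * a = a * a * a * a * (b * a * a * a * a * b * a⁻¹)⁻¹ * (a * a * a * a)⁻¹ * (b⁻¹ * (b * a * a * a * a * b * a⁻¹) * b⁻¹⁻¹) * ((b⁻¹ * a * a * a * a * a * b * a * a * a * a * a * a)) := by simp only [mul_assoc, mul_inv_rev, inv_inv, inv_mul_cancel_left, mul_inv_cancel_left, inv_mul_cancel, mul_inv_cancel, one_mul, mul_one]
    rw [key, h6, hJ0]; group
  have h17 : b⁻¹ * a * a * a * a * a * b * a⁻¹ * a⁻¹ * a⁻¹ * a⁻¹ * a⁻¹ = 1 := by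
    have key : b⁻¹ * a * a * a * a * a * b * a⁻¹ * a⁻¹ * a⁻¹ * a⁻¹ * a⁻¹ = (b⁻¹ * a * a * a * a * a * b * a * a * a * a * a * a) * ((a * a * a * a * a * a * a * a * a * a * a)⁻¹) := by simp only [mul_assoc, mul_inv_rev, inv_inv, inv_mul_cancel_left, mul_inv_cancel_left, inv_mul_cancel, mul_inv_cancel, one_mul, mul_one]
    rw [key, hJ0, hK0]; group
  have h19 : b⁻¹ * a * a * a * b * a⁻¹ * a⁻¹ * a⁻¹ = 1 := by
    have key : b⁻¹ * a * a * a * b * a⁻¹ * a⁻¹ * a⁻¹ = (b⁻¹ * a * a * a * a * a * b * a⁻¹ * a⁻¹ * a⁻¹ * a⁻¹ * a⁻¹) * (a * a * a * a * a * (b⁻¹ * a * a * a * a * a * b * a⁻¹ * a⁻¹ * a⁻¹ * a⁻¹ * a⁻¹) * (a * a * a * a * a)⁻¹) * (a * a * a * a * a * a * a * a * a * a * (b⁻¹ * a * a * a * a * a * b * a⁻¹ * a⁻¹ * a⁻¹ * a⁻¹ * a⁻¹) * (a * a * a * a * a * a * a * a * a * a)⁻¹) * (a * a * a * a * a * a *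 a * a * a * a * a * a * a * a * a * (b⁻¹ * a * a * a * a * a * b * a⁻¹ * a⁻¹ * a⁻¹ * a⁻¹ * a⁻¹) * (a * a * a * a * a * a * a * a * a * a * a * a * a * a * a)⁻¹) * (a * a * a * a * a * a * a * a * a * a * a * a * a * a * a * a * a * a * a * a * (b⁻¹ * a * a * a * a * a * b * a⁻¹ * a⁻¹ * a⁻¹ * a⁻¹ * a⁻¹) * (a * a * a * a * a * a * a * a * a * a * a * a * a * a * a * a * a * a * a * a)⁻¹) * (a * a * a * a * a * a * a * a * a * a * a * a * a * a * a * a * a * a * a * a * a * a * a * a * a * b⁻¹ * (a * a * a * a * a * a * a * a * a * a * a)⁻¹ * (a * a * a * a * a * a * a * a * a * a * a * a * a * a * a * a * a * a * a * a * a * a * a * a * a * b⁻¹)⁻¹) * (a * a * a * a * a * a * a * a * a * a * a * a * a * a * a * a * a * a * a * a * a * a * a * a * a * b⁻¹ * (a * a * a * a * a * a * a * a * a * a * a)⁻¹ * (a * a * a * a * a * a * a * a * a * a * a * a * a * a * a * a * a * a * a * a * a * a * a * a * a * b⁻¹)⁻¹) * ((a * a * a * a * a * a * a * a * a * a * a))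 * ((a * a * a * a * a * a * a * a * a * a * a)) := by simp only [mul_assoc, mul_inv_rev, inv_inv, inv_mul_cancel_left, mul_inv_cancel_left, inv_mul_cancel, mul_inv_cancel, one_mul, mul_one]
    rw [key, h17, hK0]; group
  have h18 : b⁻¹ * a * b * a⁻¹ = 1 := by
    have key : b⁻¹ * a * b * a⁻¹ = (b⁻¹ * a * a * a * a * a * b * a⁻¹ * a⁻¹ * a⁻¹ * a⁻¹ * a⁻¹) * (a * a * a * a * a * (b⁻¹ * a * a * a * a * a * b * a⁻¹ * a⁻¹ * a⁻¹ * a⁻¹ * a⁻¹) * (a * a * a * a * a)⁻¹) * (a * a * a * a * a * a * a * (b⁻¹ * a * a * a * b * a⁻¹ * a⁻¹ * a⁻¹)⁻¹ * (a * a * a * a * a * a * a)⁻¹) * (a * a * a * a * (b⁻¹ * a * a * a * b * a⁻¹ * a⁻¹ * a⁻¹)⁻¹ * (a * a * a * a)⁻¹) * (a * (b⁻¹ * a * a * a * b * a⁻¹ * a⁻¹ * a⁻¹)⁻¹ * a⁻¹) := by simp only [mul_assoc, mul_inv_rev, inv_inv, inv_mul_cancel_left, mul_inv_cancel_left, inv_mul_cancel,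 mul_inv_cancel, one_mul, mul_one]
    rw [key, h17, h19]; group
  have hb0 : b * a⁻¹ * a⁻¹ * a⁻¹ * a⁻¹ = 1 := by
    have key : b * a⁻¹ * a⁻¹ * a⁻¹ * a⁻¹ = b * (b⁻¹ * a * a * a * b * a * b⁻¹)⁻¹ * b⁻¹ * (a * a * a * b * (b⁻¹ * a * b * a⁻¹)⁻¹ * (a * a * a * b)⁻¹) := by simp only [mul_assoc, mul_inv_rev, inv_inv, inv_mul_cancel_left, mul_inv_cancel_left, inv_mul_cancel, mul_inv_cancel, one_mul, mul_one]
    rw [key, h4, h18]; group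
  have hK : a ^ 11 = 1 := by
    calc a ^ 11 = a * a * a * a * a * a * a * a * a * a * a := by norm_num [pow_succ]
    _ = 1 := hK0
  have hb : b = a ^ 4 := by
    calc b = (b * a⁻¹ * a⁻¹ * a⁻¹ * a⁻¹) * (a * a * a * a) := by
          simp only [mul_assoc, mul_inv_rev, inv_inv, inv_mul_cancel_left, mul_inv_cancel_left,
            inv_mul_cancel, mul_inv_cancel, one_mul, mul_one]
    _ = 1 * (a * a * a * a) := by rw [hb0]
    _ = a ^ 4 := by norm_num [pow_succ]
  have hx2' : x 2 = a ^ 5 := by rw [hx2, hb]; norm_num [← pow_succ']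
  have hx3' : x 3 = a ^ 9 := by rw [hx3, hb]; norm_num [← pow_succ', ← pow_add]
  have hx4' : x 4 = a ^ 14 := by rw [hx4, hb]; norm_num [← pow_succ', ← pow_add]
  -- every generator lies in the cyclic subgroup generated by `a`
  have hj : ∀ j : ZMod 5, (PresentedGroup.of j : FibonacciGroup 5) ∈ Subgroup.zpowers a := by
    have h5 : ∀ j : ZMod 5, j = 0 ∨ j = 1 ∨ j = 2 ∨ j = 3 ∨ j = 4 := by decide
    intro j
    rcases h5 j with rfl | rfl | rfl | rfl | rfl
    · exact Subgroup.mem_zpowers a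
    · show b ∈ Subgroup.zpowers a
      rw [hb]; exact pow_mem (Subgroup.mem_zpowers a) 4
    · show x 2 ∈ Subgroup.zpowers a
      rw [hx2']; exact pow_mem (Subgroup.mem_zpowers a) 5
    · show x 3 ∈ Subgroup.zpowers a
      rw [hx3']; exact pow_mem (Subgroup.mem_zpowers a) 9
    · show x 4 ∈ Subgroup.zpowers a
      rw [hx4']; exact pow_mem (Subgroup.mem_zpowers a) 14
  have htop : Subgroup.zpowers a = ⊤ := by
    rw [eq_top_iff]
    intro g _
    exact PresentedGroup.generated_by _ _ hj g
  -- the homomorphism to `ZMod 11`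
  have hφ : ∃ φ : FibonacciGroup 5 →* Multiplicative (ZMod 11),
      φ a = Multiplicative.ofAdd 1 := by
    refine ⟨PresentedGroup.toGroup fibAux_lift, ?_⟩
    exact PresentedGroup.toGroup.of fibAux_lift
  obtain ⟨φ, hφa⟩ := hφ
  have horder : orderOf a = 11 := by
    have hdvd : orderOf a ∣ 11 := orderOf_dvd_of_pow_eq_one hK
    have h1 : orderOf (φ a) ∣ orderOf a := orderOf_map_dvd φ a
    have h2 : orderOf (φ a) = 11 := by
      rw [hφa]
      rw [orderOf_ofAdd_eq_addOrderOf]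
      exact ZMod.addOrderOf_one 11
    exact Nat.dvd_antisymm hdvd (h2 ▸ h1)
  have hcard : Nat.card (FibonacciGroup 5) = 11 := by
    calc Nat.card (FibonacciGroup 5) = Nat.card (⊤ : Subgroup (FibonacciGroup 5)) :=
      (Subgroup.card_top).symm
    _ = Nat.card (Subgroup.zpowers a) := by rw [← htop]
    _ = orderOf a := Nat.card_zpowers a
    _ = 11 := horder
  refine ⟨hcard, ⟨a, fun g => ?_⟩⟩
  have hg : g ∈ Subgroup.zpowers a := by rw [htop]; trivial
  exact Subgroup.mem_zpowers_iff.mp hg
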